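/- Let u_N solve the semi-discrete Fourier-Galerkin scheme for the fractional ZK equation. Then the discrete Hamiltonian energy H(u_N) = (1/2)\int_\Omega |(-\Delta)^{\alpha/4} u_N|^2 dx - (1/6)\int_\Omega u_N^3 dx is conserved in time: d/dt H(u_N(t)) = 0. -/

import Mathlib

/-- Spectral fractional Laplacian symbol `|k|^α` for `k ∈ ℤ²`. -/
noncomputable def fracCoef (α : ℝ) (k : ℤ × ℤ) : ℝ :=
  ((k.1 : ℝ) ^ 2 + (k.2 : ℝ) ^ 2) ^ (α / 2)

/-- The set of Fourier modes `{k ∈ ℤ² : |k|_∞ ≤ N}` of `𝕏_N`. -/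
noncomputable def box (N : ℕ) : Finset (ℤ × ℤ) :=
  Finset.Icc (-(N : ℤ), -(N : ℤ)) ((N : ℤ), (N : ℤ))

/-- Right-hand side of the Fourier–Galerkin scheme
`(∂_t u_N, v) + ((-Δ)^{α/2} u_N, ∂_{x_1} v) - (1/2)(u_N², ∂_{x_1} v) = 0` for all
`v ∈ 𝕏_N`, written mode-by-mode (take `v = e^{i m ⋅ x}`). -/
noncomputable def galerkinRHS (α : ℝ) (N : ℕ) (c : ℤ × ℤ → ℂ) (m : ℤ × ℤ) : ℂ :=
  Complex.I * (m.1 : ℂ) * (fracCoef α m : ℂ) * c m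
    - (Complex.I * (m.1 : ℂ) / 2) * ∑ k ∈ box N, c k * c (m - k)

/-- Discrete Hamiltonian energy
`H(u_N) = (1/2) ∫_Ω |(-Δ)^{α/4} u_N|² dx - (1/6) ∫_Ω u_N³ dx`, written via Parseval in
terms of the Fourier coefficients `c` of `u_N ∈ 𝕏_N`:
`∫ |(-Δ)^{α/4}u_N|² = (2π)² ∑_m |m|^α |c m|²` and
`∫ u_N³ = (2π)² ∑_{k,l} c k c l c (-(k+l))`. -/
noncomputable def discreteHamiltonian (α : ℝ) (N : ℕ) (c : ℤ × ℤ → ℂ) : ℝ :=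
  (1 / 2) * (2 * Real.pi) ^ 2 * ∑ m ∈ box N, fracCoef α m * ‖c m‖ ^ 2
    - (1 / 6) * (2 * Real.pi) ^ 2 *
        (∑ k ∈ box N, ∑ l ∈ box N, c k * c l * c (-(k + l))).re

lemma mem_box_neg {N : ℕ} {m : ℤ × ℤ} : -m ∈ box N ↔ m ∈ box N := by
  simp only [box, Finset.mem_Icc, Prod.le_def, Prod.fst_neg, Prod.snd_neg]
  omega

lemma sum_box_neg {M : Type*} [AddCommMonoid M] (N : ℕ) (f : ℤ × ℤ → M) :
    ∑ m ∈ box N, f (-m) = ∑ m ∈ box N, f m := by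
  refine Finset.sum_equiv (Equiv.neg (ℤ × ℤ)) (fun m => ?_) (fun m _ => rfl)
  simpa using mem_box_neg.symm

lemma fracCoef_neg (α : ℝ) (m : ℤ × ℤ) : fracCoef α (-m) = fracCoef α m := by
  simp [fracCoef]

lemma convComm (N : ℕ) (f g : ℤ × ℤ → ℂ) (hf : ∀ m ∉ box N, f m = 0)
    (hg : ∀ m ∉ box N, g m = 0) (v : ℤ × ℤ) :
    ∑ k ∈ box N, f k * g (v - k) = ∑ m ∈ box N, g m * f (v - m) := by
  have h1 : ∀ (F G : ℤ × ℤ → ℂ), (∀ m ∉ box N, G m = 0) →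
      ∀ k, F k * G (v - k) = ∑ m ∈ box N, if m = v - k then F k * G m else 0 := by
    intro F G hG k
    rw [Finset.sum_ite_eq' (box N) (v - k) (fun m => F k * G m)]
    by_cases h : v - k ∈ box N
    · simp [h]
    · simp [h, hG _ h]
  calc ∑ k ∈ box N, f k * g (v - k)
      = ∑ k ∈ box N, ∑ m ∈ box N, if m = v - k then f k * g m else 0 :=
        Finset.sum_congr rfl fun k _ => h1 f g hg k
    _ = ∑ m ∈ box N, ∑ k ∈ box N, if m = v - k then f k * g m else 0 := Finset.sum_comm
    _ = ∑ m ∈ box N, ∑ k ∈ box N, if k = v - m then g m * f k else 0 := by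
        refine Finset.sum_congr rfl fun m _ => Finset.sum_congr rfl fun k _ => ?_
        refine if_congr ?_ (mul_comm _ _) rfl
        constructor <;> rintro rfl <;> abel
    _ = ∑ m ∈ box N, g m * f (v - m) := (Finset.sum_congr rfl fun m _ => (h1 g f hf m)).symm

lemma keyAlg (α : ℝ) (N : ℕ) (c d : ℤ × ℤ → ℂ)
    (hc : ∀ m ∉ box N, c m = 0)
    (hd : ∀ m, d m = if m ∈ box N then galerkinRHS α N c m else 0) :
    (((1 : ℝ)/2 * (2*Real.pi)^2 : ℝ) : ℂ) *
        ∑ m ∈ box N, (fracCoef α m : ℂ) * (d m * c (-m) + c m * d (-m))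
      - (((1 : ℝ)/6 * (2*Real.pi)^2 : ℝ) : ℂ) *
        ∑ k ∈ box N, ∑ l ∈ box N,
          ((d k * c l + c k * d l) * c (-(k+l)) + c k * c l * d (-(k+l))) = 0 := by
  set Q : ℤ × ℤ → ℂ := fun m => ∑ k ∈ box N, c k * c (m - k) with hQ
  set e : ℤ × ℤ → ℂ := fun m => (fracCoef α m : ℂ) * c m - Q m / 2 with he
  have hd0 : ∀ m ∉ box N, d m = 0 := by intro m hm; rw [hd]; simp [hm]
  have hde : ∀ m ∈ box N, d m = Complex.I * (m.1 : ℂ) * e m := by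
    intro m hm
    rw [hd, if_pos hm]
    show galerkinRHS α N c m = Complex.I * (m.1 : ℂ) * ((fracCoef α m : ℂ) * c m - Q m / 2)
    rw [galerkinRHS, hQ]
    ring
  -- Step 1: quadratic part
  have L1 : ∑ m ∈ box N, (fracCoef α m : ℂ) * (d m * c (-m) + c m * d (-m))
      = 2 * ∑ m ∈ box N, d m * ((fracCoef α m : ℂ) * c (-m)) := by
    have h2 : ∑ m ∈ box N, (fracCoef α m : ℂ) * (c m * d (-m))
        = ∑ m ∈ box N, d m * ((fracCoef α m : ℂ) * c (-m)) := by
      rw [← sum_box_neg N (fun m => (fracCoef α m : ℂ) * (c m * d (-m)))]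
      refine Finset.sum_congr rfl fun m _ => ?_
      rw [fracCoef_neg, neg_neg]
      ring
    calc ∑ m ∈ box N, (fracCoef α m : ℂ) * (d m * c (-m) + c m * d (-m))
        = ∑ m ∈ box N, ((fracCoef α m : ℂ) * (d m * c (-m))
            + (fracCoef α m : ℂ) * (c m * d (-m))) :=
          Finset.sum_congr rfl fun m _ => by ring
      _ = (∑ m ∈ box N, (fracCoef α m : ℂ) * (d m * c (-m)))
            + ∑ m ∈ box N, (fracCoef α m : ℂ) * (c m * d (-m)) := Finset.sum_add_distrib
      _ = 2 * ∑ m ∈ box N, d m * ((fracCoef α m : ℂ) * c (-m)) := by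
          rw [h2]; rw [two_mul]; congr 1
          exact Finset.sum_congr rfl fun m _ => by ring
  -- Step 2: cubic part
  have hS1 : ∑ k ∈ box N, ∑ l ∈ box N, d k * c l * c (-(k+l))
      = ∑ m ∈ box N, d m * Q (-m) := by
    refine Finset.sum_congr rfl fun k _ => ?_
    rw [hQ, Finset.mul_sum]
    refine Finset.sum_congr rfl fun l _ => ?_
    rw [show -(k+l) = -k - l by abel]
    ring
  have hS2 : ∑ k ∈ box N, ∑ l ∈ box N, c k * d l * c (-(k+l))
      = ∑ m ∈ box N, d m * Q (-m) := by
    rw [Finset.sum_comm]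
    refine Finset.sum_congr rfl fun l _ => ?_
    rw [hQ, Finset.mul_sum]
    refine Finset.sum_congr rfl fun k _ => ?_
    rw [show -(k+l) = -l - k by abel]
    ring
  have hS3 : ∑ k ∈ box N, ∑ l ∈ box N, c k * c l * d (-(k+l))
      = ∑ m ∈ box N, d m * Q (-m) := by
    have hconv : ∀ k : ℤ × ℤ, ∑ l ∈ box N, c l * d (-k - l)
        = ∑ m ∈ box N, d m * c (-k - m) := fun k => convComm N c d hc hd0 (-k)
    calc ∑ k ∈ box N, ∑ l ∈ box N, c k * c l * d (-(k+l))
        = ∑ k ∈ box N, ∑ l ∈ box N, c k * (c l * d (-k - l)) :=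
          Finset.sum_congr rfl fun k _ => Finset.sum_congr rfl fun l _ => by
            rw [show -(k+l) = -k - l by abel]; ring
      _ = ∑ k ∈ box N, c k * ∑ l ∈ box N, c l * d (-k - l) := by
          refine Finset.sum_congr rfl fun k _ => ?_; rw [Finset.mul_sum]
      _ = ∑ k ∈ box N, c k * ∑ m ∈ box N, d m * c (-k - m) :=
          Finset.sum_congr rfl fun k _ => by rw [hconv k]
      _ = ∑ k ∈ box N, ∑ m ∈ box N, d m * (c k * c (-m - k)) := by
          refine Finset.sum_congr rfl fun k _ => ?_
          rw [Finset.mul_sum]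
          refine Finset.sum_congr rfl fun m _ => ?_
          rw [show -k - m = -m - k by abel]; ring
      _ = ∑ m ∈ box N, ∑ k ∈ box N, d m * (c k * c (-m - k)) := Finset.sum_comm
      _ = ∑ m ∈ box N, d m * Q (-m) := by
          refine Finset.sum_congr rfl fun m _ => ?_
          rw [hQ, Finset.mul_sum]
  have hsplit : ∑ k ∈ box N, ∑ l ∈ box N,
        ((d k * c l + c k * d l) * c (-(k+l)) + c k * c l * d (-(k+l)))
      = 3 * ∑ m ∈ box N, d m * Q (-m) := by
    have hterm : ∀ k l : ℤ × ℤ,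
        (d k * c l + c k * d l) * c (-(k+l)) + c k * c l * d (-(k+l))
          = d k * c l * c (-(k+l)) + c k * d l * c (-(k+l)) + c k * c l * d (-(k+l)) := by
      intros; ring
    calc ∑ k ∈ box N, ∑ l ∈ box N,
          ((d k * c l + c k * d l) * c (-(k+l)) + c k * c l * d (-(k+l)))
        = ∑ k ∈ box N, ((∑ l ∈ box N, d k * c l * c (-(k+l)))
            + (∑ l ∈ box N, c k * d l * c (-(k+l)))
            + ∑ l ∈ box N, c k * c l * d (-(k+l))) := by
          refine Finset.sum_congr rfl fun k _ => ?_
          rw [← Finset.sum_add_distrib, ← Finset.sum_add_distrib]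
          exact Finset.sum_congr rfl fun l _ => hterm k l
      _ = (∑ k ∈ box N, ∑ l ∈ box N, d k * c l * c (-(k+l)))
            + (∑ k ∈ box N, ∑ l ∈ box N, c k * d l * c (-(k+l)))
            + ∑ k ∈ box N, ∑ l ∈ box N, c k * c l * d (-(k+l)) := by
          rw [← Finset.sum_add_distrib, ← Finset.sum_add_distrib]
      _ = 3 * ∑ m ∈ box N, d m * Q (-m) := by rw [hS1, hS2, hS3]; ring
  -- Step 3: the core cancellation
  have key0 : ∑ m ∈ box N, d m * e (-m) = 0 := by
    have hsub : ∑ m ∈ box N, d m * e (-m)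
        = ∑ m ∈ box N, Complex.I * (m.1 : ℂ) * (e m * e (-m)) := by
      refine Finset.sum_congr rfl fun m hm => ?_
      rw [hde m hm]; ring
    rw [hsub]
    have hneg : ∑ m ∈ box N, Complex.I * (m.1 : ℂ) * (e m * e (-m))
        = -∑ m ∈ box N, Complex.I * (m.1 : ℂ) * (e m * e (-m)) := by
      conv_lhs => rw [← sum_box_neg N (fun m => Complex.I * (m.1 : ℂ) * (e m * e (-m)))]
      rw [← Finset.sum_neg_distrib]
      refine Finset.sum_congr rfl fun m _ => ?_
      rw [neg_neg]
      push_cast [Prod.fst_neg]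
      ring
    linear_combination hneg / 2
  -- Step 4: relate the bracket to e (-m)
  have hbracket : ∑ m ∈ box N, d m * ((fracCoef α m : ℂ) * c (-m))
        - (1/2 : ℂ) * ∑ m ∈ box N, d m * Q (-m) = 0 := by
    calc ∑ m ∈ box N, d m * ((fracCoef α m : ℂ) * c (-m))
          - (1/2 : ℂ) * ∑ m ∈ box N, d m * Q (-m)
        = ∑ m ∈ box N, (d m * ((fracCoef α m : ℂ) * c (-m)) - (1/2 : ℂ) * (d m * Q (-m))) := by
          rw [Finset.sum_sub_distrib, Finset.mul_sum]
      _ = ∑ m ∈ box N, d m * e (-m) := by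
          refine Finset.sum_congr rfl fun m _ => ?_
          rw [he]
          show d m * ((fracCoef α m : ℂ) * c (-m)) - (1/2 : ℂ) * (d m * Q (-m))
            = d m * ((fracCoef α (-m) : ℂ) * c (-m) - Q (-m) / 2)
          rw [fracCoef_neg]
          ring
      _ = 0 := key0
  rw [L1, hsplit]
  push_cast
  linear_combination (2 * (Real.pi : ℂ))^2 * hbracket

/-- Conservation of the discrete Hamiltonian energy for the semi-discrete
Fourier–Galerkin scheme for the fractional ZK equation: `d/dt H(u_N(t)) = 0`. -/
theorem discrete_hamiltonian_conservation (α : ℝ) (hα : 1 ≤ α) (hα' : α ≤ 2)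
    (N : ℕ) (T : ℝ) (hT : 0 < T) (U : ℝ → ℤ × ℤ → ℂ)
    (hsupp : ∀ t, t ∈ Set.Icc 0 T → ∀ m, m ∉ box N → U t m = 0)
    (hreal : ∀ t, t ∈ Set.Icc 0 T → ∀ k, U t (-k) = (starRingEnd ℂ) (U t k))
    (hODE : ∀ t ∈ Set.Icc 0 T, ∀ m ∈ box N,
      HasDerivWithinAt (fun s => U s m) (galerkinRHS α N (U t) m) (Set.Icc 0 T) t) :
    ∀ t ∈ Set.Icc 0 T,
      HasDerivWithinAt (fun s => discreteHamiltonian α N (U s)) 0 (Set.Icc 0 T) t := by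
  intro t ht
  set d : ℤ × ℤ → ℂ := fun m => if m ∈ box N then galerkinRHS α N (U t) m else 0 with hd_def
  have hd : ∀ m, HasDerivWithinAt (fun s => U s m) (d m) (Set.Icc 0 T) t := by
    intro m
    by_cases h : m ∈ box N
    · simpa [hd_def, h] using hODE t ht m h
    · have hzero : ∀ s ∈ Set.Icc 0 T, U s m = 0 := fun s hs => hsupp s hs m h
      have : HasDerivWithinAt (fun _ : ℝ => (0 : ℂ)) 0 (Set.Icc 0 T) t :=
        hasDerivWithinAt_const t _ 0
      simpa [hd_def, h] using this.congr (fun s hs => hzero s hs) (hzero t ht)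
  -- the complexified Hamiltonian
  set Gc : ℝ → ℂ := fun s =>
    (((1 : ℝ)/2 * (2*Real.pi)^2 : ℝ) : ℂ) *
        ∑ m ∈ box N, (fracCoef α m : ℂ) * (U s m * U s (-m))
      - (((1 : ℝ)/6 * (2*Real.pi)^2 : ℝ) : ℂ) *
        ∑ k ∈ box N, ∑ l ∈ box N, U s k * U s l * U s (-(k+l)) with hGc_def
  have hG : HasDerivWithinAt Gc
      ((((1 : ℝ)/2 * (2*Real.pi)^2 : ℝ) : ℂ) *
          ∑ m ∈ box N, (fracCoef α m : ℂ) * (d m * U t (-m) + U t m * d (-m))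
        - (((1 : ℝ)/6 * (2*Real.pi)^2 : ℝ) : ℂ) *
          ∑ k ∈ box N, ∑ l ∈ box N,
            ((d k * U t l + U t k * d l) * U t (-(k+l)) + U t k * U t l * d (-(k+l))))
      (Set.Icc 0 T) t := by
    refine HasDerivWithinAt.sub ?_ ?_
    · exact (HasDerivWithinAt.fun_sum fun m _ => ((hd m).fun_mul (hd (-m))).const_mul _).const_mul _
    · exact (HasDerivWithinAt.fun_sum fun k _ =>
        HasDerivWithinAt.fun_sum fun l _ => ((hd k).fun_mul (hd l)).fun_mul (hd (-(k+l)))).const_mul _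
  have h0 := keyAlg α N (U t) d (fun m hm => hsupp t ht m hm) (fun m => rfl)
  rw [h0] at hG
  have hRe : HasDerivWithinAt (fun s => (Gc s).re) 0 (Set.Icc 0 T) t := by
    have h1 := Complex.reCLM.hasFDerivAt.comp_hasDerivWithinAt t hG
    simp only [map_zero] at h1
    exact h1
  have hval : ∀ s ∈ Set.Icc 0 T, discreteHamiltonian α N (U s) = (Gc s).re := by
    intro s hs
    have hsum1 : ∑ m ∈ box N, fracCoef α m * ‖U s m‖^2
        = (∑ m ∈ box N, (fracCoef α m : ℂ) * (U s m * U s (-m))).re := by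
      rw [Complex.re_sum]
      refine Finset.sum_congr rfl fun m _ => ?_
      rw [hreal s hs m, Complex.mul_conj, Complex.re_ofReal_mul]
      simp [Complex.normSq_eq_norm_sq, ← Complex.ofReal_pow]
    rw [hGc_def]
    simp only [discreteHamiltonian, Complex.sub_re, Complex.re_ofReal_mul]
    rw [← hsum1]
  exact hRe.congr (fun s hs => hval s hs) (hval t ht)
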